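/- Let x ∈ ℝ⁹ with x₁ ≥ ⋯ ≥ x₉ > 0, and suppose the 3×3 symmetric matrix L₁(x) = [[2x₉, x₈−x₁, x₆−x₂],[x₈−x₁, 2x₇, x₅−x₃],[x₆−x₂, x₅−x₃, 2x₄]] is positive semidefinite. Then x₁ ≤ x₈ + 2√(x₇x₉) ≤ x₇ + x₈ + x₉. Moreover, if x₁ = x₈ + 2√(x₇x₉), then x₂ = x₃ = x₄ = x₅ = x₆. -/

import Mathlib

/-- The Hildebrand matrix `L₁` built from a vector `x ∈ ℝ⁹` (indices `x 0, …, x 8`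
correspond to `x₁, …, x₉`). -/
def L1 (x : Fin 9 → ℝ) : Matrix (Fin 3) (Fin 3) ℝ :=
  !![2 * x 8, x 7 - x 0, x 5 - x 1;
     x 7 - x 0, 2 * x 6, x 4 - x 2;
     x 5 - x 1, x 4 - x 2, 2 * x 3]

set_option maxHeartbeats 1600000 in
/-- If `x₁ ≥ ⋯ ≥ x₉ > 0` and `L₁(x)` is positive semidefinite, then
`x₁ ≤ x₈ + 2√(x₇x₉) ≤ x₇ + x₈ + x₉`, and if the first inequality is an equality then
`x₂ = x₃ = x₄ = x₅ = x₆`. -/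
theorem L1_posSemidef_bounds (x : Fin 9 → ℝ)
    (hsort : ∀ i j : Fin 9, i ≤ j → x j ≤ x i)
    (hpos : ∀ i, 0 < x i)
    (hL1 : (L1 x).PosSemidef) :
    x 0 ≤ x 7 + 2 * Real.sqrt (x 6 * x 8) ∧
    x 7 + 2 * Real.sqrt (x 6 * x 8) ≤ x 6 + x 7 + x 8 ∧
    (x 0 = x 7 + 2 * Real.sqrt (x 6 * x 8) →
      x 1 = x 2 ∧ x 2 = x 3 ∧ x 3 = x 4 ∧ x 4 = x 5) := by
  have key : ∀ a b c : ℝ,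
      0 ≤ 2*x 8*a^2 + 2*(x 7 - x 0)*a*b + 2*x 6*b^2 + 2*(x 5 - x 1)*a*c
        + 2*(x 4 - x 2)*b*c + 2*x 3*c^2 := by
    intro a b c
    have h := hL1.dotProduct_mulVec_nonneg ![a,b,c]
    simp [L1, Matrix.mulVec, dotProduct, Fin.sum_univ_succ] at h
    nlinarith [h]
  have h8 := hpos 8
  have h6 := hpos 6
  have h3 := hpos 3
  -- discriminant bound from the top-left 2×2 block
  have hsq : (x 0 - x 7)^2 ≤ 4 * (x 6 * x 8) := by
    have h := key (x 0 - x 7) (2 * x 8) 0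
    nlinarith [h, h8]
  have h4eq : Real.sqrt (4 * (x 6 * x 8)) = 2 * Real.sqrt (x 6 * x 8) := by
    rw [show (4:ℝ) * (x 6 * x 8) = 2^2 * (x 6 * x 8) by norm_num,
      Real.sqrt_mul (by positivity), Real.sqrt_sq (by norm_num)]
  have part1 : x 0 ≤ x 7 + 2 * Real.sqrt (x 6 * x 8) := by
    have : x 0 - x 7 ≤ 2 * Real.sqrt (x 6 * x 8) := by
      calc x 0 - x 7 ≤ |x 0 - x 7| := le_abs_self _
        _ = Real.sqrt ((x 0 - x 7)^2) := (Real.sqrt_sq_eq_abs _).symm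
        _ ≤ Real.sqrt (4 * (x 6 * x 8)) := Real.sqrt_le_sqrt hsq
        _ = 2 * Real.sqrt (x 6 * x 8) := h4eq
    linarith
  have part2 : x 7 + 2 * Real.sqrt (x 6 * x 8) ≤ x 6 + x 7 + x 8 := by
    have h := Real.sqrt_le_sqrt (show x 6 * x 8 ≤ ((x 6 + x 8)/2)^2 by
      nlinarith [sq_nonneg (x 6 - x 8)])
    rw [Real.sqrt_sq (by positivity)] at h
    linarith
  refine ⟨part1, part2, ?_⟩
  intro heq
  set s := Real.sqrt (x 6) with hs
  set t := Real.sqrt (x 8) with ht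
  have hs2 : s^2 = x 6 := Real.sq_sqrt h6.le
  have ht2 : t^2 = x 8 := Real.sq_sqrt h8.le
  have hspos : 0 < s := Real.sqrt_pos.mpr h6
  have htpos : 0 < t := Real.sqrt_pos.mpr h8
  have hst : Real.sqrt (x 6 * x 8) = s * t := Real.sqrt_mul h6.le _
  have hd' : x 7 - x 0 = -(2*(s*t)) := by rw [heq, hst]; ring
  have hCsq : (s * (x 5 - x 1) + t * (x 4 - x 2))^2 ≤ 0 := by
    have h := key (2 * x 3 * s) (2 * x 3 * t) (-(s * (x 5 - x 1) + t * (x 4 - x 2)))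
    rw [hd', ← hs2, ← ht2] at h
    nlinarith [h, h3]
  have hC : s * (x 5 - x 1) + t * (x 4 - x 2) = 0 :=
    sq_eq_zero_iff.mp (le_antisymm hCsq (sq_nonneg _))
  have h15 : x 5 ≤ x 1 := hsort 1 5 (by decide)
  have h24 : x 4 ≤ x 2 := hsort 2 4 (by decide)
  have h1 : 0 ≤ s * (x 1 - x 5) := mul_nonneg hspos.le (by linarith)
  have h2 : 0 ≤ t * (x 2 - x 4) := mul_nonneg htpos.le (by linarith)
  have hA : s * (x 1 - x 5) = 0 := by nlinarith [h1, h2, hC]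
  have hx15 : x 1 = x 5 := by
    rcases mul_eq_zero.mp hA with h' | h'
    · exact absurd h' hspos.ne'
    · linarith
  have h12 : x 2 ≤ x 1 := hsort 1 2 (by decide)
  have h23 : x 3 ≤ x 2 := hsort 2 3 (by decide)
  have h34 : x 4 ≤ x 3 := hsort 3 4 (by decide)
  have h45 : x 5 ≤ x 4 := hsort 4 5 (by decide)
  exact ⟨by linarith, by linarith, by linarith, by linarith⟩
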